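/- Assume the direct-system setup with the interleaving hypothesis (H), and assume that for every k and all n < m the transition map j^k_{n,m} : G^k_n → G^k_m is the zero homomorphism. Then F_∞ is trivial, i.e. F_∞ = 0. -/
import Mathlib


/-- Under the direct-system setup with the interleaving hypothesis (H), if all the
transition maps `j^k_{n,m}` (for `n < m`) are zero, then `F_∞` is trivial. -/
theorem finf_trivial
    (F : ℕ → Type) [∀ n, AddCommGroup (F n)]
    (Finf : Type) [AddCommGroup Finf]
    (i2 : ∀ n m : ℕ, n ≤ m → (F n →+ F m))
    (i : ∀ n, F n →+ Finf)
    (hFid : ∀ (n : ℕ) (x : F n), i2 n n le_rfl x = x)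
    (hFcomp : ∀ (n m l : ℕ) (h1 : n ≤ m) (h2 : m ≤ l) (x : F n),
      i2 m l h2 (i2 n m h1 x) = i2 n l (h1.trans h2) x)
    (hicompat : ∀ (n m : ℕ) (h : n ≤ m) (x : F n), i m (i2 n m h x) = i n x)
    (hiexh : ∀ z : Finf, ∃ (n : ℕ) (x : F n), i n x = z)
    (hiker : ∀ (n : ℕ) (x : F n), i n x = 0 → ∃ (m : ℕ) (h : n ≤ m), i2 n m h x = 0)
    (G : ℕ → ℕ → Type) [∀ k n, AddCommGroup (G k n)]
    (Ginf : ℕ → Type) [∀ k, AddCommGroup (Ginf k)]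
    (j2 : ∀ (k n m : ℕ), n ≤ m → (G k n →+ G k m))
    (j : ∀ k n, G k n →+ Ginf k)
    (hGid : ∀ (k n : ℕ) (y : G k n), j2 k n n le_rfl y = y)
    (hGcomp : ∀ (k n m l : ℕ) (h1 : n ≤ m) (h2 : m ≤ l) (y : G k n),
      j2 k m l h2 (j2 k n m h1 y) = j2 k n l (h1.trans h2) y)
    (hjcompat : ∀ (k n m : ℕ) (h : n ≤ m) (y : G k n), j k m (j2 k n m h y) = j k n y)
    (hjexh : ∀ (k : ℕ) (z : Ginf k), ∃ (n : ℕ) (y : G k n), j k n y = z)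
    (hjker : ∀ (k n : ℕ) (y : G k n), j k n y = 0 → ∃ (m : ℕ) (h : n ≤ m), j2 k n m h y = 0)
    (hH : ∀ n₀ : ℕ, ∃ (k : ℕ) (a : ∀ n, F n →+ G k (n+1)) (b : ∀ n, G k n →+ F (n+1)),
      (∀ n, n + 1 ≤ n₀ → ∀ x : F n,
        a (n+1) (i2 n (n+1) (by omega) x) = j2 k (n+1) (n+2) (by omega) (a n x)) ∧
      (∀ n, n + 1 ≤ n₀ → ∀ y : G k n,
        b (n+1) (j2 k n (n+1) (by omega) y) = i2 (n+1) (n+2) (by omega) (b n y)) ∧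
      (∀ n, n + 1 ≤ n₀ → ∀ x : F n, b (n+1) (a n x) = i2 n (n+2) (by omega) x) ∧
      (∀ n, n + 1 ≤ n₀ → ∀ y : G k n, a (n+1) (b n y) = j2 k n (n+2) (by omega) y))
    (hzero : ∀ (k n m : ℕ) (h : n < m) (y : G k n), j2 k n m h.le y = 0)
    : ∀ z : Finf, z = 0 := by
  intro z
  obtain ⟨n, x, hx⟩ := hiexh z
  obtain ⟨k, a, b, hab1, hab2, hab3, hab4⟩ := hH (n + 2)
  have key : i2 n (n + 3) (by omega) x = 0 := by
    have h1 := hab3 (n + 1) (by omega) (i2 n (n + 1) (by omega) x)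
    have h2 := hab1 n (by omega) x
    rw [h2, hzero k (n+1) (n+2) (by omega), map_zero,
      hFcomp n (n+1) (n+3) (by omega) (by omega)] at h1
    exact h1.symm
  rw [← hx, ← hicompat n (n + 3) (by omega) x, key, map_zero]
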